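/- The double integral (1/(8π)) ∬_{ℝ²} u_1(x,t)^3 dx dt equals 2, where u_1(x,t) = 4(1 - x^2 + t^2)/(1 + x^2 + t^2)^2. -/

import Mathlib

open MeasureTheory Real Filter Topology

noncomputable def F1 (y : ℝ) : ℝ :=
  y * (60*(1+y^2)^4 + 40*(1+y^2)^3 + 96*(1+y^2)^2 - 192*(1+y^2) + 256) / (5*(1+y^2)^5)
  + 12 * arctan y

lemma F1_deriv (y : ℝ) : HasDerivAt F1 (64*(1-y^2)^3/(1+y^2)^6) y := by
  have hw : HasDerivAt (fun y : ℝ => 1 + y^2) (2*y) y := by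
    simpa using ((hasDerivAt_pow 2 y).const_add 1)
  have hQ : HasDerivAt (fun y : ℝ => 60*(1+y^2)^4 + 40*(1+y^2)^3 + 96*(1+y^2)^2 - 192*(1+y^2) + 256)
      (60*(4*(1+y^2)^3*(2*y)) + 40*(3*(1+y^2)^2*(2*y)) + 96*(2*(1+y^2)^1*(2*y)) - 192*(2*y)) y := by
    have h4 := (hw.pow 4).const_mul (60:ℝ)
    have h3 := (hw.pow 3).const_mul (40:ℝ)
    have h2 := (hw.pow 2).const_mul (96:ℝ)
    have h1 := hw.const_mul (192:ℝ)
    simpa [Nat.cast_ofNat, mul_comm, mul_assoc, mul_left_comm] using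
      (((h4.add h3).add h2).sub h1).add_const (256:ℝ)
  have hN := (hasDerivAt_id y).mul hQ
  have hD : HasDerivAt (fun y : ℝ => 5*(1+y^2)^5) (5*(5*(1+y^2)^4*(2*y))) y :=
    (hw.pow 5).const_mul (5:ℝ)
  have hDne : (5*(1+y^2)^5) ≠ 0 := by positivity
  have hrat := hN.div hD hDne
  have harc := (hasDerivAt_arctan y).const_mul (12:ℝ)
  have h := hrat.add harc
  convert h using 1
  · rfl
  · rfl
  · rfl
  have h1 : (1:ℝ) + y^2 ≠ 0 := by positivity
  simp only [Pi.mul_apply, id]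
  field_simp
  ring

lemma F1_int : Integrable (fun y : ℝ => 64*(1-y^2)^3/(1+y^2)^6) := by
  have hb : Integrable (fun y : ℝ => 64 * (1+y^2)⁻¹) :=
    integrable_inv_one_add_sq.const_mul 64
  refine hb.mono' ?_ ?_
  · apply Continuous.aestronglyMeasurable
    exact (continuous_const.mul ((continuous_const.sub (continuous_pow 2)).pow 3)).div
      ((continuous_const.add (continuous_pow 2)).pow 6) (fun y => by positivity)
  · refine Filter.Eventually.of_forall (fun y => ?_)
    have h1 : |1 - y^2| ≤ 1 + y^2 := by rw [abs_le]; constructor <;> nlinarith [sq_nonneg y]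
    have h2 : (0:ℝ) < 1 + y^2 := by positivity
    rw [Real.norm_eq_abs, abs_div, abs_of_pos (by positivity : (0:ℝ) < (1+y^2)^6), abs_mul,
      abs_pow]
    rw [div_le_iff₀ (by positivity)]
    have : |(64:ℝ)| = 64 := by norm_num
    rw [this]
    have hb3 : |1 - y^2|^3 ≤ (1+y^2)^3 := by
      exact pow_le_pow_left₀ (abs_nonneg _) h1 3
    have hmono : (1+y^2)^(4:ℕ) ≤ (1+y^2)^(6:ℕ) :=
      pow_le_pow_right₀ (by nlinarith [sq_nonneg y]) (by norm_num)
    calc (64:ℝ) * |1-y^2|^3 ≤ 64 * (1+y^2)^3 := by nlinarith [abs_nonneg (1-y^2)]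
      _ ≤ 64 * (1+y^2)⁻¹ * (1+y^2)^6 := by
          rw [mul_assoc, mul_le_mul_iff_right₀ (by norm_num : (0:ℝ)<64), inv_mul_eq_div,
            le_div_iff₀ h2]
          calc (1+y^2)^3 * (1+y^2) = (1+y^2)^(4:ℕ) := by ring
            _ ≤ (1+y^2)^(6:ℕ) := hmono

noncomputable def phi1 (u : ℝ) : ℝ :=
  u*(60*(1+u^2)^4+40*u^2*(1+u^2)^3+96*u^4*(1+u^2)^2-192*u^6*(1+u^2)+256*u^8)/(5*(1+u^2)^5)

lemma phi1_cont : ContinuousAt phi1 0 := by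
  apply ContinuousAt.div
  · fun_prop
  · fun_prop
  · norm_num

lemma F1_eq (y : ℝ) (hy : y ≠ 0) : F1 y = phi1 (1/y) + 12 * arctan y := by
  have h1 : (1:ℝ) + y^2 ≠ 0 := by positivity
  have h2 : (1:ℝ) + (1/y)^2 ≠ 0 := by positivity
  unfold F1 phi1
  field_simp
  ring

lemma inv_top : Tendsto (fun y : ℝ => 1/y) atTop (𝓝 0) := by
  simpa [one_div] using (tendsto_inv_atTop_zero : Tendsto (fun r : ℝ => r⁻¹) atTop (𝓝 0))

lemma inv_bot : Tendsto (fun y : ℝ => 1/y) atBot (𝓝 0) := by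
  have h := ((tendsto_inv_atTop_zero (𝕜 := ℝ)).comp tendsto_neg_atBot_atTop).neg
  have heq : (fun y : ℝ => -((-y)⁻¹)) = fun y : ℝ => 1/y := by
    funext y; rw [inv_neg, neg_neg, one_div]
  rw [show -(0:ℝ) = 0 by ring] at h
  exact heq ▸ h

lemma phi1_zero : phi1 0 = 0 := by simp [phi1]

lemma F1_top : Tendsto F1 atTop (𝓝 (6*π)) := by
  have h1 : Tendsto (fun y : ℝ => phi1 (1/y)) atTop (𝓝 0) := by
    simpa [phi1_zero, Function.comp_def] using phi1_cont.tendsto.comp inv_top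
  have h2 : Tendsto (fun y : ℝ => 12 * arctan y) atTop (𝓝 (12*(π/2))) :=
    (tendsto_arctan_atTop.mono_right nhdsWithin_le_nhds).const_mul 12
  have h := h1.add h2
  have heq : ∀ᶠ y in atTop, phi1 (1/y) + 12 * arctan y = F1 y := by
    filter_upwards [eventually_gt_atTop (0:ℝ)] with y hy
    rw [F1_eq y hy.ne']
  have := h.congr' heq
  convert this using 2
  ring

lemma F1_bot : Tendsto F1 atBot (𝓝 (-(6*π))) := by
  have h1 : Tendsto (fun y : ℝ => phi1 (1/y)) atBot (𝓝 0) := by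
    simpa [phi1_zero, Function.comp_def] using phi1_cont.tendsto.comp inv_bot
  have h2 : Tendsto (fun y : ℝ => 12 * arctan y) atBot (𝓝 (12*(-(π/2)))) :=
    (tendsto_arctan_atBot.mono_right nhdsWithin_le_nhds).const_mul 12
  have h := h1.add h2
  have heq : ∀ᶠ y in atBot, phi1 (1/y) + 12 * arctan y = F1 y := by
    filter_upwards [eventually_lt_atBot (0:ℝ)] with y hy
    rw [F1_eq y hy.ne]
  have := h.congr' heq
  convert this using 2
  ring

lemma lem1 : ∫ y : ℝ, 64*(1-y^2)^3/(1+y^2)^6 = 12*π := by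
  have key := integral_of_hasDerivAt_of_tendsto F1_deriv F1_int F1_bot F1_top
  rw [key]; ring

lemma inner_int (c : ℝ) (hc : 0 < c) :
    ∫ x : ℝ, 64*(c - x^2)^3/(c + x^2)^6 = 12*π/(c^2*Real.sqrt c) := by
  set s := Real.sqrt c with hs
  have hs0 : 0 < s := Real.sqrt_pos.mpr hc
  have hs2 : s^2 = c := Real.sq_sqrt hc.le
  have hkey : ∀ x : ℝ, 64*(c - x^2)^3/(c + x^2)^6
      = c⁻¹^3 * (64*(1-(s⁻¹*x)^2)^3/(1+(s⁻¹*x)^2)^6) := by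
    intro x
    have hsi : s⁻¹^2 = c⁻¹ := by rw [inv_pow, hs2]
    rw [mul_pow, hsi]
    have h1 : c ≠ 0 := hc.ne'
    have h2 : c + x^2 ≠ 0 := by positivity
    field_simp
  simp_rw [hkey]
  rw [integral_const_mul, Measure.integral_comp_inv_mul_left
    (fun y : ℝ => 64*(1-y^2)^3/(1+y^2)^6) s, lem1, smul_eq_mul, abs_of_pos hs0]
  rw [← hs2]
  field_simp

noncomputable def G2 (t : ℝ) : ℝ :=
  12*π*(t/(3*(1+t^2)*Real.sqrt (1+t^2)) + 2*t/(3*Real.sqrt (1+t^2)))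

lemma sqrt_deriv (t : ℝ) :
    HasDerivAt (fun t : ℝ => Real.sqrt (1+t^2)) (1/(2*Real.sqrt (1+t^2))*(2*t)) t := by
  have hw : HasDerivAt (fun t : ℝ => 1 + t^2) (2*t) t := by
    simpa using ((hasDerivAt_pow 2 t).const_add 1)
  exact (Real.hasDerivAt_sqrt (by positivity)).comp t hw

lemma G2_deriv (t : ℝ) : HasDerivAt G2 (12*π/((1+t^2)^2*Real.sqrt (1+t^2))) t := by
  have hw : HasDerivAt (fun t : ℝ => 1 + t^2) (2*t) t := by
    simpa using ((hasDerivAt_pow 2 t).const_add 1)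
  set s := Real.sqrt (1+t^2) with hs
  have hs0 : 0 < s := Real.sqrt_pos.mpr (by positivity)
  have hs2 : s^2 = 1 + t^2 := Real.sq_sqrt (by positivity)
  have hsd := sqrt_deriv t
  have hD1 : HasDerivAt (fun t : ℝ => 3*((1+t^2)*Real.sqrt (1+t^2)))
      (3*((2*t)*s + (1+t^2)*(1/(2*s)*(2*t)))) t := (hw.mul hsd).const_mul 3
  have hD2 : HasDerivAt (fun t : ℝ => 3*Real.sqrt (1+t^2)) (3*(1/(2*s)*(2*t))) t :=
    hsd.const_mul 3
  have hD1ne : 3*((1+t^2)*s) ≠ 0 := by positivity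
  have hD2ne : 3*s ≠ 0 := by positivity
  have h1 := (hasDerivAt_id t).div hD1 hD1ne
  have h2 := ((hasDerivAt_id t).const_mul (2:ℝ)).div hD2 hD2ne
  have h := (h1.add h2).const_mul (12*π)
  have hG : G2 = fun t : ℝ => 12*π*(t/(3*((1+t^2)*Real.sqrt (1+t^2))) + 2*t/(3*Real.sqrt (1+t^2))) := by
    funext u; unfold G2; ring_nf
  rw [hG]
  convert h using 1
  · rfl
  · rfl
  · rfl
  simp only [id]
  rw [← hs]
  rw [← hs2]
  have ht2 : (1:ℝ)+t^2 = s^2 := hs2.symm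
  field_simp
  linear_combination (-2*s^2-3) * hs2

noncomputable def Phi2 (u : ℝ) : ℝ :=
  12*π*(u^2/(3*(1+u^2)*Real.sqrt (1+u^2)) + 2/(3*Real.sqrt (1+u^2)))

lemma Phi2_cont : ContinuousAt Phi2 0 := by
  have hs : Continuous (fun u : ℝ => Real.sqrt (1+u^2)) := by fun_prop
  apply ContinuousAt.mul continuousAt_const
  apply ContinuousAt.add
  · exact ContinuousAt.div (by fun_prop) (by fun_prop) (by norm_num [Real.sqrt_one])
  · exact ContinuousAt.div continuousAt_const (by fun_prop) (by norm_num [Real.sqrt_one])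

lemma Phi2_zero : Phi2 0 = 8*π := by
  unfold Phi2
  rw [show (1:ℝ)+0^2 = 1 by norm_num, Real.sqrt_one]
  ring

lemma sqrt_inv_eq (t : ℝ) (ht : t ≠ 0) :
    Real.sqrt (1+(1/t)^2) = Real.sqrt (1+t^2) / |t| := by
  have h : 1+(1/t)^2 = (1+t^2)/t^2 := by field_simp; ring
  rw [h, Real.sqrt_div (by positivity), Real.sqrt_sq_eq_abs]

lemma G2_eq_top (t : ℝ) (ht : 0 < t) : G2 t = Phi2 (1/t) := by
  have hs0 : 0 < Real.sqrt (1+t^2) := Real.sqrt_pos.mpr (by positivity)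
  unfold G2 Phi2
  rw [sqrt_inv_eq t ht.ne', abs_of_pos ht]
  set s := Real.sqrt (1+t^2)
  have h1 : (1:ℝ)+t^2 ≠ 0 := by positivity
  field_simp
  ring

lemma G2_eq_bot (t : ℝ) (ht : t < 0) : G2 t = -Phi2 (1/t) := by
  have hs0 : 0 < Real.sqrt (1+t^2) := Real.sqrt_pos.mpr (by positivity)
  unfold G2 Phi2
  rw [sqrt_inv_eq t ht.ne, abs_of_neg ht,
    show (1:ℝ)+(1/t)^2 = (1+t^2)/t^2 from by field_simp [ht.ne]; ring]
  set s := Real.sqrt (1+t^2)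
  have h1 : (1:ℝ)+t^2 ≠ 0 := by positivity
  have ht0 : t ≠ 0 := ht.ne
  field_simp
  ring

lemma G2_top : Tendsto G2 atTop (𝓝 (8*π)) := by
  have h : Tendsto (fun t : ℝ => Phi2 (1/t)) atTop (𝓝 (8*π)) := by
    simpa [Phi2_zero, Function.comp_def] using Phi2_cont.tendsto.comp inv_top
  refine h.congr' ?_
  filter_upwards [eventually_gt_atTop (0:ℝ)] with t ht
  exact (G2_eq_top t ht).symm

lemma G2_bot : Tendsto G2 atBot (𝓝 (-(8*π))) := by
  have h : Tendsto (fun t : ℝ => -Phi2 (1/t)) atBot (𝓝 (-(8*π))) := by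
    simpa [Phi2_zero, Function.comp_def] using (Phi2_cont.tendsto.comp inv_bot).neg
  refine h.congr' ?_
  filter_upwards [eventually_lt_atBot (0:ℝ)] with t ht
  exact (G2_eq_bot t ht).symm

lemma G2_int : Integrable (fun t : ℝ => 12*π/((1+t^2)^2*Real.sqrt (1+t^2))) := by
  have hb : Integrable (fun t : ℝ => (12*π) * (1+t^2)⁻¹) :=
    integrable_inv_one_add_sq.const_mul _
  refine hb.mono' ?_ ?_
  · apply Continuous.aestronglyMeasurable
    exact continuous_const.div (by fun_prop) (fun t => by positivity)
  · refine Filter.Eventually.of_forall (fun t => ?_)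
    have hs1 : 1 ≤ Real.sqrt (1+t^2) := by
      nlinarith [Real.sq_sqrt (show (0:ℝ) ≤ 1+t^2 by positivity),
        Real.sqrt_nonneg (1+t^2), sq_nonneg t]
    have h2 : (0:ℝ) < 1 + t^2 := by positivity
    have hD : (1+t^2) ≤ (1+t^2)^2*Real.sqrt (1+t^2) := by nlinarith
    rw [Real.norm_eq_abs, abs_of_pos (by positivity), ← div_eq_mul_inv]
    exact div_le_div_of_nonneg_left (by positivity) h2 hD

lemma lem2 : ∫ t : ℝ, 12*π/((1+t^2)^2*Real.sqrt (1+t^2)) = 16*π := by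
  have key := integral_of_hasDerivAt_of_tendsto G2_deriv G2_int G2_bot G2_top
  rw [key]; ring

lemma main_integrable :
    Integrable (fun p : ℝ × ℝ => (4*(1 - p.1^2 + p.2^2)/(1+p.1^2+p.2^2)^2)^3) := by
  have hfr : (Module.finrank ℝ (ℝ × ℝ) : ℝ) < 6 := by
    simp [Module.finrank_prod]; norm_num
  have hb : Integrable (fun p : ℝ × ℝ => 512 * (1+‖p‖)^(-6:ℝ)) :=
    (integrable_one_add_norm hfr).const_mul 512
  refine hb.mono' ?_ ?_
  · apply Continuous.aestronglyMeasurable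
    apply Continuous.pow
    exact Continuous.div (by fun_prop) (by fun_prop) (fun p => by positivity)
  · refine Filter.Eventually.of_forall (fun p => ?_)
    obtain ⟨x, t⟩ := p
    have hw : (0:ℝ) < 1 + x^2 + t^2 := by positivity
    have hnp : ‖(x, t)‖^2 ≤ x^2 + t^2 := by
      have h : ‖(x, t)‖ = max |x| |t| := by
        rw [Prod.norm_def, Real.norm_eq_abs, Real.norm_eq_abs]
      rw [h]
      rcases le_total |x| |t| with hxt | hxt
      · rw [max_eq_right hxt, sq_abs]; nlinarith [sq_nonneg x]
      · rw [max_eq_left hxt, sq_abs]; nlinarith [sq_nonneg t]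
    have hn0 : (0:ℝ) ≤ ‖(x, t)‖ := norm_nonneg _
    have h2 : (1+‖(x, t)‖)^2 ≤ 2*(1+x^2+t^2) := by nlinarith [sq_nonneg (1-‖(x, t)‖)]
    have h6 : (1+‖(x, t)‖)^6 ≤ 8*(1+x^2+t^2)^3 := by
      have := pow_le_pow_left₀ (by positivity) h2 3
      calc (1+‖(x, t)‖)^6 = ((1+‖(x, t)‖)^2)^3 := by ring
        _ ≤ (2*(1+x^2+t^2))^3 := this
        _ = 8*(1+x^2+t^2)^3 := by ring
    have hr : (1+‖(x, t)‖)^(-6:ℝ) = ((1+‖(x, t)‖)^(6:ℕ))⁻¹ := by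
      rw [← Real.rpow_natCast (1+‖(x, t)‖) 6, ← Real.rpow_neg (by positivity)]
      norm_num
    have ha : |4*(1 - x^2 + t^2)| ≤ 4*(1+x^2+t^2) := by
      rw [abs_mul, abs_of_pos (by norm_num : (0:ℝ) < 4)]
      have : |1 - x^2 + t^2| ≤ 1+x^2+t^2 := by
        rw [abs_le]; constructor <;> nlinarith [sq_nonneg x, sq_nonneg t]
      nlinarith
    have hq : |4*(1 - x^2 + t^2)/(1+x^2+t^2)^2| ≤ 4/(1+x^2+t^2) := by
      rw [abs_div, abs_of_pos (by positivity : (0:ℝ) < (1+x^2+t^2)^2),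
        div_le_div_iff₀ (by positivity) hw]
      nlinarith
    rw [Real.norm_eq_abs, abs_pow, hr]
    calc |4*(1 - x^2 + t^2)/(1+x^2+t^2)^2|^3 ≤ (4/(1+x^2+t^2))^3 :=
          pow_le_pow_left₀ (abs_nonneg _) hq 3
      _ = 64/(1+x^2+t^2)^3 := by rw [div_pow]; norm_num
      _ ≤ 512 * ((1+‖(x, t)‖)^(6:ℕ))⁻¹ := by
          rw [← div_eq_mul_inv, div_le_div_iff₀ (by positivity) (by positivity)]
          nlinarith [pow_pos hw 3]

theorem stmt9 :
    (1 / (8 * π)) *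
      ∫ p : ℝ × ℝ, (4 * (1 - p.1^2 + p.2^2) / (1 + p.1^2 + p.2^2)^2)^3 = 2 := by
  have hint : Integrable
      (fun p : ℝ × ℝ => (4*(1 - p.1^2 + p.2^2)/(1+p.1^2+p.2^2)^2)^3)
      ((volume : Measure ℝ).prod volume) := by
    rw [← Measure.volume_eq_prod]; exact main_integrable
  have hfub := integral_prod_symm
    (fun p : ℝ × ℝ => (4*(1 - p.1^2 + p.2^2)/(1+p.1^2+p.2^2)^2)^3) hint
  have hin : ∀ y : ℝ, (∫ x : ℝ, (4*(1 - x^2 + y^2)/(1+x^2+y^2)^2)^3)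
      = 12*π/((1+y^2)^2*Real.sqrt (1+y^2)) := by
    intro y
    rw [← inner_int (1+y^2) (by positivity)]
    congr 1
    funext x
    have hb : (1:ℝ)+x^2+y^2 ≠ 0 := by positivity
    have hb2 : (1:ℝ)+y^2+x^2 ≠ 0 := by positivity
    field_simp
    ring
  rw [Measure.volume_eq_prod, hfub]
  simp only
  rw [show (∫ y : ℝ, ∫ x : ℝ, (4*(1 - x^2 + y^2)/(1+x^2+y^2)^2)^3)
      = ∫ y : ℝ, 12*π/((1+y^2)^2*Real.sqrt (1+y^2)) from by
    congr 1; funext y; exact hin y]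
  rw [lem2]
  field_simp
  ring
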